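/- Let a countable group Γ act on the right on a countable set X. Suppose that for every finite subset G ⊆ Γ and every ε > 0 there is a nonempty finite subset F ⊆ X with #(F \ F·g) < ε·#(F) for all g ∈ G. Suppose moreover F₁, F₂ ⊆ X are finite with F₂ ⊆ F₁ ∪ (F₁·g) for some g. Then the existence of such Følner sets for all (G, ε) implies the existence of a finitely additive Γ-invariant mean on X (amenability of the action). -/

import Mathlib

open Set Filter Topology

theorem stmt_4 {Γ X : Type*} [Group Γ] [Countable Γ] [Countable X] [DecidableEq X]
    (act : X → Γ → X)
    (act_one : ∀ x, act x 1 = x)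
    (act_mul : ∀ x g h, act (act x g) h = act x (g * h))
    (folner : ∀ (G : Finset Γ) (ε : ℝ), 0 < ε →
      ∃ F : Finset X, F.Nonempty ∧ ∀ g ∈ G,
        ((F \ F.image (fun x => act x g)).card : ℝ) < ε * F.card)
    (hF12 : ∃ (F₁ F₂ : Finset X) (g : Γ),
      (F₂ : Set X) ⊆ (F₁ : Set X) ∪ ((F₁.image (fun x => act x g) : Finset X) : Set X)) :
    ∃ μ : Set X → ℝ,
      (∀ A, 0 ≤ μ A) ∧
      μ Set.univ = 1 ∧
      (∀ A B : Set X, Disjoint A B → μ (A ∪ B) = μ A + μ B) ∧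
      (∀ (A : Set X) (g : Γ), μ ((fun x => act x g) '' A) = μ A) := by
  classical
  obtain ⟨e, he⟩ := exists_surjective_nat Γ
  have hinj : ∀ g : Γ, Function.Injective (fun x => act x g) := by
    intro g x y h
    have h2 := congrArg (fun z => act z g⁻¹) h
    simpa [act_mul, act_one] using h2
  have hmem : ∀ (A : Set X) (g : Γ) (x : X),
      x ∈ (fun y => act y g) '' A ↔ act x g⁻¹ ∈ A := by
    intro A g x
    constructor
    · rintro ⟨a, ha, rfl⟩
      simpa [act_mul, act_one] using ha
    · intro h
      exact ⟨act x g⁻¹, h, by simp [act_mul, act_one]⟩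
  set G : ℕ → Finset Γ := fun n =>
    ((Finset.range n).image e) ∪ ((Finset.range n).image (fun i => (e i)⁻¹)) with hGdef
  have hfol : ∀ n : ℕ, ∃ F : Finset X, F.Nonempty ∧ ∀ g ∈ G n,
      ((F \ F.image (fun x => act x g)).card : ℝ) < (1/(n+1)) * F.card := by
    intro n; exact folner (G n) (1/(n+1)) (by positivity)
  choose F hFne hF using hfol
  have hFpos : ∀ n, (0:ℝ) < (F n).card := fun n => by
    exact_mod_cast Finset.card_pos.2 (hFne n)
  set f : Set X → ℕ → ℝ := fun A n =>
    (((F n).filter (fun x => x ∈ A)).card : ℝ) / ((F n).card : ℝ) with hfdef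
  have hf01 : ∀ (A : Set X) (n : ℕ), f A n ∈ Set.Icc (0:ℝ) 1 := by
    intro A n
    constructor
    · positivity
    · rw [div_le_one (hFpos n)]
      exact_mod_cast Finset.card_filter_le _ _
  set U : Ultrafilter ℕ := Filter.hyperfilter ℕ with hUdef
  have hconv : ∀ A : Set X, ∃ a, Tendsto (f A) (U : Filter ℕ) (𝓝 a) := by
    intro A
    obtain ⟨a, -, ha⟩ := (isCompact_Icc (a := (0:ℝ)) (b := 1)).ultrafilter_le_nhds
      (U.map (f A))
      (le_principal_iff.2 (mem_map.2 (univ_mem' (fun n => hf01 A n))))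
    exact ⟨a, ha⟩
  choose μ hμ using hconv
  have hUle : (U : Filter ℕ) ≤ atTop := by
    rw [← Nat.cofinite_eq_atTop]
    exact Filter.hyperfilter_le_cofinite
  refine ⟨μ, ?_, ?_, ?_, ?_⟩
  · intro A
    exact ge_of_tendsto' (hμ A) (fun n => (hf01 A n).1)
  · have h1 : f Set.univ = fun _ => (1:ℝ) := by
      funext n
      simp only [hfdef, Set.mem_univ, Finset.filter_true]
      exact div_self (ne_of_gt (hFpos n))
    refine tendsto_nhds_unique (hμ Set.univ) ?_
    rw [h1]; exact tendsto_const_nhds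
  · intro A B hAB
    have h1 : f (A ∪ B) = fun n => f A n + f B n := by
      funext n
      simp only [hfdef]
      rw [← add_div]
      congr 1
      have hdisj : Disjoint ((F n).filter (fun x => x ∈ A)) ((F n).filter (fun x => x ∈ B)) := by
        rw [Finset.disjoint_left]
        intro x hx hx'
        exact Set.disjoint_left.1 hAB (Finset.mem_filter.1 hx).2 (Finset.mem_filter.1 hx').2
      rw [← Nat.cast_add]
      congr 1
      rw [← Finset.card_union_of_disjoint hdisj]
      congr 1
      ext x
      simp only [Finset.mem_filter, Finset.mem_union, Set.mem_union]
      tauto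
    refine tendsto_nhds_unique (hμ (A ∪ B)) ?_
    rw [h1]
    exact (hμ A).add (hμ B)
  · intro A g
    -- key card identities
    have key : ∀ n, g ∈ G n → g⁻¹ ∈ G n →
        |f ((fun x => act x g) '' A) n - f A n| ≤ 2/(n+1) := by
      intro n hg hg'
      set S := F n with hS
      set T := S.image (fun x => act x g⁻¹) with hT
      -- step 1
      have himg : (S.filter (fun x => x ∈ (fun y => act y g) '' A)).image (fun x => act x g⁻¹)
          = T.filter (fun x => x ∈ A) := by
        ext y
        simp only [Finset.mem_image, Finset.mem_filter, hT]
        constructor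
        · rintro ⟨x, ⟨hxS, hxA⟩, rfl⟩
          exact ⟨⟨x, hxS, rfl⟩, (hmem A g x).1 hxA⟩
        · rintro ⟨⟨x, hxS, rfl⟩, hyA⟩
          exact ⟨x, ⟨hxS, (hmem A g x).2 hyA⟩, rfl⟩
      have hcard1 : (S.filter (fun x => x ∈ (fun y => act y g) '' A)).card
          = (T.filter (fun x => x ∈ A)).card := by
        rw [← himg, Finset.card_image_of_injective _ (hinj g⁻¹)]
      -- step 2 : subset bounds
      have hsub : ∀ (S' T' : Finset X), T'.filter (fun x => x ∈ A)
          ⊆ S'.filter (fun x => x ∈ A) ∪ (T' \ S') := by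
        intro S' T' x hx
        obtain ⟨hxT, hxA⟩ := Finset.mem_filter.1 hx
        by_cases hxS : x ∈ S'
        · exact Finset.mem_union_left _ (Finset.mem_filter.2 ⟨hxS, hxA⟩)
        · exact Finset.mem_union_right _ (Finset.mem_sdiff.2 ⟨hxT, hxS⟩)
      have hb1 : (T.filter (fun x => x ∈ A)).card
          ≤ (S.filter (fun x => x ∈ A)).card + (T \ S).card :=
        le_trans (Finset.card_le_card (hsub S T)) (Finset.card_union_le _ _)
      have hb2 : (S.filter (fun x => x ∈ A)).card
          ≤ (T.filter (fun x => x ∈ A)).card + (S \ T).card :=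
        le_trans (Finset.card_le_card (hsub T S)) (Finset.card_union_le _ _)
      -- step 3 : (T \ S).card = (S \ S·g).card
      have hTS : ∀ x, x ∈ T ↔ act x g ∈ S := by
        intro x
        simp only [hT, Finset.mem_image]
        constructor
        · rintro ⟨s, hs, rfl⟩
          simpa [act_mul, act_one] using hs
        · intro h
          exact ⟨act x g, h, by simp [act_mul, act_one]⟩
      have hSg : ∀ x, act x g ∈ S.image (fun y => act y g) ↔ x ∈ S := by
        intro x
        simp only [Finset.mem_image]
        constructor
        · rintro ⟨s, hs, hsx⟩
          have := hinj g hsx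
          rwa [← this]
        · intro h; exact ⟨x, h, rfl⟩
      have himg2 : (T \ S).image (fun x => act x g) = S \ S.image (fun y => act y g) := by
        ext y
        constructor
        · intro hy
          obtain ⟨x, hx, rfl⟩ := Finset.mem_image.1 hy
          obtain ⟨hxT, hxS⟩ := Finset.mem_sdiff.1 hx
          exact Finset.mem_sdiff.2 ⟨(hTS x).1 hxT, fun h => hxS ((hSg x).1 h)⟩
        · intro hy
          obtain ⟨hyS, hyg⟩ := Finset.mem_sdiff.1 hy
          refine Finset.mem_image.2
            ⟨act y g⁻¹, Finset.mem_sdiff.2 ⟨?_, ?_⟩, by simp [act_mul, act_one]⟩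
          · rw [hTS]; simpa [act_mul, act_one] using hyS
          · intro h
            apply hyg
            have h2 : act (act y g⁻¹) g ∈ S.image (fun z => act z g) := (hSg _).2 h
            simpa [act_mul, act_one] using h2
      have hcardTS : (T \ S).card = (S \ S.image (fun y => act y g)).card := by
        rw [← himg2, Finset.card_image_of_injective _ (hinj g)]
      -- bounds from Følner
      have hbbg : ((S \ S.image (fun y => act y g)).card : ℝ) < (1/(n+1)) * S.card := hF n g hg
      have hbbg' : ((S \ T).card : ℝ) < (1/(n+1)) * S.card := hF n g⁻¹ hg'
      -- combine in ℝ
      have hnum : |((T.filter (fun x => x ∈ A)).card : ℝ)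
          - ((S.filter (fun x => x ∈ A)).card : ℝ)|
          ≤ ((T \ S).card : ℝ) + ((S \ T).card : ℝ) := by
        rw [abs_sub_le_iff]
        constructor
        · have := hb1
          have h' : ((T.filter (fun x => x ∈ A)).card : ℝ)
              ≤ ((S.filter (fun x => x ∈ A)).card : ℝ) + ((T \ S).card : ℝ) := by
            exact_mod_cast this
          linarith [show (0:ℝ) ≤ ((S \ T).card : ℝ) by positivity]
        · have h' : ((S.filter (fun x => x ∈ A)).card : ℝ)
              ≤ ((T.filter (fun x => x ∈ A)).card : ℝ) + ((S \ T).card : ℝ) := by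
            exact_mod_cast hb2
          linarith [show (0:ℝ) ≤ ((T \ S).card : ℝ) by positivity]
      have hnum2 : |((T.filter (fun x => x ∈ A)).card : ℝ)
          - ((S.filter (fun x => x ∈ A)).card : ℝ)| ≤ (2/(n+1)) * S.card := by
        have h3 : ((T \ S).card : ℝ) < (1/(n+1)) * S.card := by
          rw [hcardTS]; exact_mod_cast hbbg
        have := hnum
        have h4 : ((T \ S).card : ℝ) + ((S \ T).card : ℝ) ≤ (2/(n+1)) * S.card := by
          have : (1/((n:ℝ)+1)) * S.card + (1/((n:ℝ)+1)) * S.card = (2/((n:ℝ)+1)) * S.card := by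
            ring
          linarith [h3, hbbg']
        linarith
      -- final
      have hfeq : f ((fun x => act x g) '' A) n - f A n
          = (((T.filter (fun x => x ∈ A)).card : ℝ)
             - ((S.filter (fun x => x ∈ A)).card : ℝ)) / (S.card : ℝ) := by
        simp only [hfdef, sub_div, hS] at hcard1 ⊢
        rw [hcard1]
      rw [hfeq, abs_div, abs_of_pos (hFpos n)]
      rw [div_le_iff₀ (hFpos n)]
      calc |((T.filter (fun x => x ∈ A)).card : ℝ)
          - ((S.filter (fun x => x ∈ A)).card : ℝ)| ≤ (2/(n+1)) * S.card := hnum2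
        _ = 2/(↑n+1) * ((F n).card : ℝ) := by rw [hS]
    -- eventually
    obtain ⟨i, hi⟩ := he g
    have hev_at : ∀ᶠ n in atTop, |f ((fun x => act x g) '' A) n - f A n| ≤ 2/(n+1) := by
      filter_upwards [eventually_ge_atTop (i+1)] with n hn
      have hin : i ∈ Finset.range n := Finset.mem_range.2 (by omega)
      apply key n
      · exact Finset.mem_union_left _ (Finset.mem_image.2 ⟨i, hin, hi⟩)
      · exact Finset.mem_union_right _ (Finset.mem_image.2 ⟨i, hin, by rw [hi]⟩)
    have hev : ∀ᶠ n in (U : Filter ℕ), ‖f ((fun x => act x g) '' A) n - f A n‖ ≤ 2/(n+1) := by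
      filter_upwards [hUle hev_at] with n hn
      simpa using hn
    have hbnd : Tendsto (fun n : ℕ => (2:ℝ)/(n+1)) (U : Filter ℕ) (𝓝 0) := by
      refine Tendsto.mono_left ?_ hUle
      have h := tendsto_const_div_atTop_nhds_zero_nat (2:ℝ)
      have h2 : Tendsto (fun n : ℕ => (2:ℝ)/((n+1 : ℕ) : ℝ)) atTop (𝓝 0) :=
        h.comp (tendsto_add_atTop_nat 1)
      convert h2 using 2 with n
      push_cast; ring
    have hzero : Tendsto (fun n => f ((fun x => act x g) '' A) n - f A n)
        (U : Filter ℕ) (𝓝 0) :=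
      squeeze_zero_norm' hev hbnd
    have htend : Tendsto (f ((fun x => act x g) '' A)) (U : Filter ℕ) (𝓝 (μ A)) := by
      have heq : f ((fun x => act x g) '' A)
          = fun n => f A n + (f ((fun x => act x g) '' A) n - f A n) := by
        funext n; ring
      rw [heq]
      simpa using (hμ A).add hzero
    exact tendsto_nhds_unique (hμ ((fun x => act x g) '' A)) htend
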